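/- Fix n ≥ 2 and 1 ≤ k ≤ n, and let (1^k) denote the single-column partition. On SVT^n((1^k)), extending every operator x by x(0) = 0, the crystal and K-crystal operators satisfy: (a) for all i with 1 ≤ i < n and all T, f_i^K T = 0 if and only if f_i T = 0, and f_i f_i^K T = 0 = f_i^K f_i T; (b) for all i, j with |i − j| > 1, f_i^K f_j = f_j f_i^K and f_i^K f_j^K = f_j^K f_i^K; (c) for all 1 ≤ i < n − 1, f_{i+1}^K ∘ f_i = f_i ∘ f_{i+1} ∘ f_i^K. -/

import Mathlib

open scoped Classical

noncomputable section

namespace SVTCrystal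

/-- A filling assigns to each (row, column) position (0-indexed) a finite set of entries. -/
abbrev Filling : Type := ℕ → ℕ → Finset ℕ

/-- `lam` is a partition shape with at most `n` rows. -/
def IsPartitionShape (n : ℕ) (lam : ℕ → ℕ) : Prop :=
  (∀ r, lam (r + 1) ≤ lam r) ∧ (∀ r, n ≤ r → lam r = 0)

/-- Semistandard set-valued tableau of shape `lam` with entries in `{1,…,n}`. -/
structure IsSVT (n : ℕ) (lam : ℕ → ℕ) (t : Filling) : Prop where
  boxNonempty : ∀ r c, c < lam r → (t r c).Nonempty
  emptyOutside : ∀ r c, ¬ c < lam r → t r c = ∅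
  entryBounds : ∀ r c a, a ∈ t r c → 1 ≤ a ∧ a ≤ n
  rowWeak : ∀ r c a b, a ∈ t r c → b ∈ t r (c + 1) → a ≤ b
  colStrict : ∀ r c a b, a ∈ t r c → b ∈ t (r + 1) c → a < b

/-- Semistandard Young tableau: a set-valued tableau all of whose boxes are singletons. -/
def IsSSYT (n : ℕ) (lam : ℕ → ℕ) (t : Filling) : Prop :=
  IsSVT n lam t ∧ ∀ r c, c < lam r → (t r c).card = 1

/-- The weight: `wt n lam t j` is the number of boxes of `t` containing the entry `j`. -/
def wt (n : ℕ) (lam : ℕ → ℕ) (t : Filling) (j : ℕ) : ℕ :=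
  ((Finset.range n ×ˢ Finset.range (lam 0)).filter (fun p => j ∈ t p.1 p.2)).card

/-- The excess: total number of extra entries. -/
def excess (n : ℕ) (lam : ℕ → ℕ) (t : Filling) : ℕ :=
  ∑ p ∈ Finset.range n ×ˢ Finset.range (lam 0), ((t p.1 p.2).card - 1)

/-- Column `c` contains the entry `a`. -/
def colHas (n : ℕ) (t : Filling) (a c : ℕ) : Prop := ∃ r, r < n ∧ a ∈ t r c

/-- The sign of column `c` for the `i`-signature rule: `+` (true) if the column contains `i`
but not `i+1`, `-` (false) if it contains `i+1` but not `i`. -/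
def colSign (n : ℕ) (t : Filling) (i c : ℕ) : Option Bool :=
  if colHas n t i c ∧ ¬ colHas n t (i + 1) c then some true
  else if colHas n t (i + 1) c ∧ ¬ colHas n t i c then some false
  else none

/-- The number of `-` (false) signs left uncanceled after scanning the word left-to-right,
iteratively canceling `-+` pairs. -/
def mctr (w : List Bool) : ℕ := w.foldl (fun cnt b => if b then cnt - 1 else cnt + 1) 0

/-- The number of `+` (true) signs left uncanceled, scanning right-to-left. -/
def pctr (w : List Bool) : ℕ := w.foldr (fun b cnt => if b then cnt + 1 else cnt - 1) 0

/-- The word of column signs of the columns before column `c`. -/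
def colWordBefore (n : ℕ) (t : Filling) (i c : ℕ) : List Bool :=
  (List.range c).filterMap (colSign n t i)

/-- The word of column signs of the columns after column `c` (among columns `< ncols`). -/
def colWordAfter (n ncols : ℕ) (t : Filling) (i c : ℕ) : List Bool :=
  ((List.range ncols).drop (c + 1)).filterMap (colSign n t i)

/-- Column `c` carries an uncanceled `+` for the `i`-signature rule. -/
def PlusCol (n ncols : ℕ) (t : Filling) (i c : ℕ) : Prop :=
  c < ncols ∧ colSign n t i c = some true ∧ mctr (colWordBefore n t i c) = 0

/-- Column `c` carries an uncanceled `-` for the `i`-signature rule. -/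
def MinusCol (n ncols : ℕ) (t : Filling) (i c : ℕ) : Prop :=
  c < ncols ∧ colSign n t i c = some false ∧ pctr (colWordAfter n ncols t i c) = 0

/-- Column `c` is the rightmost uncanceled `+`. -/
def fBoxCol (n ncols : ℕ) (t : Filling) (i c : ℕ) : Prop :=
  PlusCol n ncols t i c ∧ ∀ c', PlusCol n ncols t i c' → c' ≤ c

/-- Column `c` is the leftmost uncanceled `-`. -/
def eBoxCol (n ncols : ℕ) (t : Filling) (i c : ℕ) : Prop :=
  MinusCol n ncols t i c ∧ ∀ c', MinusCol n ncols t i c' → c ≤ c'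

/-- Replace the content of the box in row `r`, column `c` by `A`. -/
def updateBox (t : Filling) (r c : ℕ) (A : Finset ℕ) : Filling :=
  fun r' c' => if r' = r ∧ c' = c then A else t r' c'

/-- The set-valued crystal operator `f_i` (signature rule). -/
def fRaw (n : ℕ) (lam : ℕ → ℕ) (i : ℕ) (t : Filling) : Option Filling :=
  if h : ∃ c, fBoxCol n (lam 0) t i c then
    let c := Classical.choose h
    if hr : ∃ r, r < n ∧ i ∈ t r c then
      let r := Classical.choose hr
      if i ∈ t r (c + 1) then
        some (updateBox (updateBox t r (c + 1) ((t r (c + 1)).erase i)) r c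
          (insert (i + 1) (t r c)))
      else some (updateBox t r c (insert (i + 1) ((t r c).erase i)))
    else none
  else none

/-- The set-valued crystal operator `e_i` (signature rule). -/
def eRaw (n : ℕ) (lam : ℕ → ℕ) (i : ℕ) (t : Filling) : Option Filling :=
  if h : ∃ c, eBoxCol n (lam 0) t i c then
    let c := Classical.choose h
    if hr : ∃ r, r < n ∧ (i + 1) ∈ t r c then
      let r := Classical.choose hr
      if 0 < c ∧ (i + 1) ∈ t r (c - 1) then
        some (updateBox (updateBox t r (c - 1) ((t r (c - 1)).erase (i + 1))) r c
          (insert i (t r c)))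
      else some (updateBox t r c (insert i ((t r c).erase (i + 1))))
    else none
  else none

/-- Iterate a partially-defined operator. -/
def iterOpt (g : Filling → Option Filling) : ℕ → Filling → Option Filling
  | 0, t => some t
  | m + 1, t => (iterOpt g m t).bind g

/-- Highest weight (Yamanouchi) elements. -/
def IsYamanouchi (n : ℕ) (lam : ℕ → ℕ) (t : Filling) : Prop :=
  ∀ i, 1 ≤ i → i < n → eRaw n lam i t = none

/-- Closure of `t0` under the crystal operators `e_i`, `f_i` for `1 ≤ i < n`. -/
inductive Reach (n : ℕ) (lam : ℕ → ℕ) (t0 : Filling) : Filling → Prop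
  | base : Reach n lam t0 t0
  | stepF : ∀ {t t' : Filling} (i : ℕ), 1 ≤ i → i < n → Reach n lam t0 t →
      fRaw n lam i t = some t' → Reach n lam t0 t'
  | stepE : ∀ {t t' : Filling} (i : ℕ), 1 ≤ i → i < n → Reach n lam t0 t →
      eRaw n lam i t = some t' → Reach n lam t0 t'

/-- The one-row partition `(s)`. -/
def rowShape (s : ℕ) : ℕ → ℕ := fun r => if r = 0 then s else 0

/-- The one-column partition `(1^k)`. -/
def colShape (k : ℕ) : ℕ → ℕ := fun r => if r < k then 1 else 0

/-- The hook partition `(s, 1^e)`. -/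
def hookShape (s e : ℕ) : ℕ → ℕ := fun r => if r = 0 then s else if r ≤ e then 1 else 0

/-! ### K-theory crystal operators (for single rows and single columns) -/

/-- Some box of the tableau contains the entry `a`. -/
def containsEntry (n : ℕ) (lam : ℕ → ℕ) (t : Filling) (a : ℕ) : Prop :=
  ∃ r c, r < n ∧ c < lam r ∧ a ∈ t r c

/-- `p` is the rightmost box of `t` containing `i`. -/
def KBoxF (n : ℕ) (lam : ℕ → ℕ) (t : Filling) (i : ℕ) (p : ℕ × ℕ) : Prop :=
  p.1 < n ∧ p.2 < lam p.1 ∧ i ∈ t p.1 p.2 ∧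
    ∀ q : ℕ × ℕ, q.1 < n → q.2 < lam q.1 → i ∈ t q.1 q.2 → q.2 ≤ p.2

/-- The K-crystal operator `f_i^K`: if `i` occurs in `t` and `i+1` does not, add `i+1` to
the rightmost box containing `i`; otherwise `0`. -/
def fK (n : ℕ) (lam : ℕ → ℕ) (i : ℕ) (t : Filling) : Option Filling :=
  if h : (∃ p : ℕ × ℕ, KBoxF n lam t i p) ∧ ¬ containsEntry n lam t (i + 1) then
    let p := Classical.choose h.1
    some (updateBox t p.1 p.2 (insert (i + 1) (t p.1 p.2)))
  else none

/-- The K-crystal operator `e_i^K`: delete `i+1` from the box containing both `i` and `i+1`,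
if such a box exists; otherwise `0`. -/
def eK (n : ℕ) (lam : ℕ → ℕ) (i : ℕ) (t : Filling) : Option Filling :=
  if h : ∃ p : ℕ × ℕ, p.1 < n ∧ p.2 < lam p.1 ∧ i ∈ t p.1 p.2 ∧ (i + 1) ∈ t p.1 p.2 then
    let p := Classical.choose h
    some (updateBox t p.1 p.2 ((t p.1 p.2).erase (i + 1)))
  else none

/-- `t'` is the result of applying `g` to `t` as many times as possible. -/
def MaxApply (g : Filling → Option Filling) (t t' : Filling) : Prop :=
  (∃ m, iterOpt g m t = some t') ∧ g t' = none

/-- One Demazure step: apply `e_i` as many times as possible, then `e_i^K` as many times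
as possible (here `eKop i` is the `i`-th K-operator). -/
def DemStep (n : ℕ) (lam : ℕ → ℕ) (eKop : ℕ → Filling → Option Filling) (i : ℕ)
    (t t' : Filling) : Prop :=
  ∃ t1, MaxApply (eRaw n lam i) t t1 ∧ MaxApply (eKop i) t1 t'

/-- `DemReach n lam eKop [i₁,…,iℓ] t u` holds when
`u = (e_{iℓ}^K)^max e_{iℓ}^max ⋯ (e_{i₁}^K)^max e_{i₁}^max t`. -/
def DemReach (n : ℕ) (lam : ℕ → ℕ) (eKop : ℕ → Filling → Option Filling) :
    List ℕ → Filling → Filling → Prop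
  | [], t, u => t = u
  | i :: rest, t, u => ∃ t2, DemStep n lam eKop i t t2 ∧ DemReach n lam eKop rest t2 u

/-- The minimal highest weight tableau `u_λ`, whose row `r` boxes are all `{r+1}`. -/
def uTab (lam : ℕ → ℕ) : Filling := fun r c => if c < lam r then {r + 1} else ∅

/-- The K-Demazure crystal associated with a word `[i₁,…,iℓ]`. -/
def KDem (n : ℕ) (lam : ℕ → ℕ) (eKop : ℕ → Filling → Option Filling) (word : List ℕ) :
    Set Filling :=
  {t | IsSVT n lam t ∧ DemReach n lam eKop word t (uTab lam)}

/-! ### Permutations and reduced words -/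

/-- The permutation `s_{i₁} ⋯ s_{iℓ}` of a word `[i₁,…,iℓ]`, where `s_i` swaps `i`, `i+1`. -/
def wordPerm (word : List ℕ) : Equiv.Perm ℕ :=
  (word.map fun i => Equiv.swap i (i + 1)).prod

/-- `word` is a reduced word for `w` in the Coxeter generators `s_1, …, s_{n-1}`. -/
def IsReducedWord (n : ℕ) (w : Equiv.Perm ℕ) (word : List ℕ) : Prop :=
  (∀ i ∈ word, 1 ≤ i ∧ i < n) ∧ wordPerm word = w ∧
    ∀ word' : List ℕ, (∀ i ∈ word', 1 ≤ i ∧ i < n) → wordPerm word' = w →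
      word.length ≤ word'.length

/-- The Coxeter length of a permutation of `{1,…,n}`. -/
def permLength (n : ℕ) (σ : Equiv.Perm ℕ) : ℕ :=
  sInf {l | ∃ word : List ℕ, (∀ i ∈ word, 1 ≤ i ∧ i < n) ∧ wordPerm word = σ ∧
    word.length = l}

/-- The parabolic subgroup generated by `s_2, …, s_{n-1}`. -/
def parabolic (n : ℕ) : Subgroup (Equiv.Perm ℕ) :=
  Subgroup.closure {σ | ∃ i, 2 ≤ i ∧ i < n ∧ σ = Equiv.swap i (i + 1)}

/-! ### Polynomials -/

/-- Polynomials in `x₁, x₂, …` over `ℤ[β]`; the variable `β` is `Polynomial.X`. -/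
abbrev KPoly : Type := MvPolynomial ℕ (Polynomial ℤ)

/-- The scalar `β`. -/
def betaP : KPoly := MvPolynomial.C Polynomial.X

/-- The monomial `x^{wt(T)} = x₁^{wt₁} ⋯ xₙ^{wtₙ}`. -/
def xwt (n : ℕ) (lam : ℕ → ℕ) (t : Filling) : KPoly :=
  ∏ j ∈ Finset.Icc 1 n, (MvPolynomial.X j : KPoly) ^ wt n lam t j

/-- The β-character `∑_{T ∈ S} β^{excess T} x^{wt T}` of a set of tableaux. -/
def charSet (n : ℕ) (lam : ℕ → ℕ) (S : Set Filling) : KPoly :=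
  ∑ᶠ t ∈ S, betaP ^ excess n lam t * xwt n lam t

/-- The symmetric Grothendieck polynomial `𝔊_λ(x₁,…,xₙ; β)`. -/
def Groth (n : ℕ) (lam : ℕ → ℕ) : KPoly :=
  charSet n lam {t | IsSVT n lam t}

/-- The Schur polynomial `s_μ(x₁,…,xₙ)`. -/
def SchurP (n : ℕ) (mu : ℕ → ℕ) : KPoly :=
  ∑ᶠ t ∈ {t : Filling | IsSSYT n mu t}, xwt n mu t

/-- The numerator defining the Demazure–Lascoux operator `ϖ_i`. -/
def DLnum (i : ℕ) (f : KPoly) : KPoly :=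
  (MvPolynomial.X i + betaP * MvPolynomial.X i * MvPolynomial.X (i + 1)) * f -
    (MvPolynomial.X (i + 1) + betaP * MvPolynomial.X i * MvPolynomial.X (i + 1)) *
      (MvPolynomial.rename (Equiv.swap i (i + 1)) f)

/-- `DL` implements the Demazure–Lascoux operators `ϖ_i` for `1 ≤ i < n`:
`(x_i - x_{i+1}) · ϖ_i f` equals the defining numerator. -/
def IsDLOp (n : ℕ) (DL : ℕ → KPoly → KPoly) : Prop :=
  ∀ i, 1 ≤ i → i < n → ∀ f : KPoly,
    (MvPolynomial.X i - MvPolynomial.X (i + 1)) * DL i f = DLnum i f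

/-- `applyDL DL [i₁,…,iℓ] f = ϖ_{i₁} ϖ_{i₂} ⋯ ϖ_{iℓ} f`. -/
def applyDL (DL : ℕ → KPoly → KPoly) : List ℕ → KPoly → KPoly
  | [], f => f
  | i :: rest, f => DL i (applyDL DL rest f)

/-! ### Auxiliary lemmas for single columns -/

section ColumnAux

variable {n k : ℕ}

lemma colShape_le_one (k r : ℕ) : colShape k r ≤ 1 := by
  unfold colShape; split <;> omega

lemma colShape_zero (hk : 1 ≤ k) : colShape k 0 = 1 := by
  simp [colShape]; omega

lemma svt_row_lt {t : Filling} (h : IsSVT n (colShape k) t) {a r : ℕ}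
    (ha : a ∈ t r 0) : r < k := by
  by_contra hr
  have he : t r 0 = ∅ := h.emptyOutside r 0 (by unfold colShape; split <;> omega)
  rw [he] at ha; simp at ha

lemma svt_col1 {t : Filling} (h : IsSVT n (colShape k) t) (r : ℕ) : t r 1 = ∅ :=
  h.emptyOutside r 1 (by have := colShape_le_one k r; omega)

lemma svt_lt {t : Filling} (h : IsSVT n (colShape k) t) :
    ∀ d r a b, a ∈ t r 0 → b ∈ t (r + d + 1) 0 → a < b := by
  intro d
  induction d with
  | zero => intro r a b ha hb; exact h.colStrict r 0 a b ha hb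
  | succ d ih =>
    intro r a b ha hb
    have hbk : r + (d + 1) + 1 < k := svt_row_lt h hb
    have hr1k : r + 1 < k := by omega
    obtain ⟨c, hc⟩ := h.boxNonempty (r + 1) 0 (by unfold colShape; split <;> omega)
    have h1 := h.colStrict r 0 a c ha hc
    have hb' : b ∈ t (r + 1 + d + 1) 0 := by
      have : r + 1 + d + 1 = r + (d + 1) + 1 := by omega
      rw [this]; exact hb
    have h2 := ih (r + 1) c b hc hb'
    omega

lemma svt_mem_unique {t : Filling} (h : IsSVT n (colShape k) t) {a r r' : ℕ}
    (ha : a ∈ t r 0) (hb : a ∈ t r' 0) : r = r' := by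
  rcases lt_trichotomy r r' with h1 | h1 | h1
  · have hb' : a ∈ t (r + (r' - r - 1) + 1) 0 := by
      have : r + (r' - r - 1) + 1 = r' := by omega
      rw [this]; exact hb
    have := svt_lt h (r' - r - 1) r a a ha hb'; omega
  · exact h1
  · have ha' : a ∈ t (r' + (r - r' - 1) + 1) 0 := by
      have : r' + (r - r' - 1) + 1 = r := by omega
      rw [this]; exact ha
    have := svt_lt h (r - r' - 1) r' a a hb ha'; omega

lemma fBoxCol_iff {t : Filling} {i : ℕ} :
    (∃ c, fBoxCol n 1 t i c) ↔ (colHas n t i 0 ∧ ¬ colHas n t (i + 1) 0) := by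
  constructor
  · rintro ⟨c, ⟨⟨hc1, hsign, -⟩, -⟩⟩
    have hc0 : c = 0 := by omega
    subst hc0
    unfold colSign at hsign
    split_ifs at hsign with h1 h2
    · exact h1
    all_goals simp at hsign
  · rintro ⟨h1, h2⟩
    refine ⟨0, ⟨⟨one_pos, ?_, by simp [colWordBefore, mctr]⟩, fun c' hc' => by
      have := hc'.1; omega⟩⟩
    unfold colSign
    rw [if_pos ⟨h1, h2⟩]

lemma fRaw_eq (hk : 1 ≤ k) {t : Filling} {i r : ℕ} (hrn : r < n) (hi : i ∈ t r 0)
    (huni : ∀ r', r' < n → i ∈ t r' 0 → r' = r)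
    (hni : ¬ colHas n t (i + 1) 0) (h1 : t r 1 = ∅) :
    fRaw n (colShape k) i t
      = some (updateBox t r 0 (insert (i + 1) ((t r 0).erase i))) := by
  have hhas : colHas n t i 0 := ⟨r, hrn, hi⟩
  have hex : ∃ c, fBoxCol n (colShape k 0) t i c := by
    rw [colShape_zero hk]; exact fBoxCol_iff.mpr ⟨hhas, hni⟩
  have hc0 : Classical.choose hex = 0 := by
    have h' := (Classical.choose_spec hex).1.1
    have h2 := colShape_le_one k 0
    omega
  unfold fRaw
  rw [dif_pos hex]
  simp only [hc0]
  have hr : ∃ r', r' < n ∧ i ∈ t r' 0 := ⟨r, hrn, hi⟩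
  rw [dif_pos hr]
  have hspec := Classical.choose_spec hr
  have hre : Classical.choose hr = r := huni _ hspec.1 hspec.2
  simp only [hre]
  rw [if_neg (by rw [zero_add, h1]; simp)]

lemma fRaw_none (hk : 1 ≤ k) {t : Filling} {i : ℕ}
    (h : ¬ (colHas n t i 0 ∧ ¬ colHas n t (i + 1) 0)) :
    fRaw n (colShape k) i t = none := by
  unfold fRaw
  rw [dif_neg]
  rw [colShape_zero hk]
  exact fun hex => h (fBoxCol_iff.mp hex)

lemma containsEntry_iff {t : Filling} (hsvt : IsSVT n (colShape k) t) (hkn : k ≤ n)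
    {a : ℕ} : containsEntry n (colShape k) t a ↔ colHas n t a 0 := by
  constructor
  · rintro ⟨r, c, hrn, hc, ha⟩
    have : c = 0 := by have := colShape_le_one k r; omega
    subst this
    exact ⟨r, hrn, ha⟩
  · rintro ⟨r, hrn, ha⟩
    have hrk := svt_row_lt hsvt ha
    exact ⟨r, 0, hrn, by unfold colShape; split <;> omega, ha⟩

lemma fK_eq (hkn : k ≤ n) {t : Filling} {i r : ℕ} (hrn : r < n) (hrk : r < k)
    (hi : i ∈ t r 0)
    (huni : ∀ r', r' < n → i ∈ t r' 0 → r' = r)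
    (hce : ¬ containsEntry n (colShape k) t (i + 1)) :
    fK n (colShape k) i t = some (updateBox t r 0 (insert (i + 1) (t r 0))) := by
  have hex : ∃ p : ℕ × ℕ, KBoxF n (colShape k) t i p :=
    ⟨(r, 0), hrn, by unfold colShape; split <;> omega, hi,
      fun q _ hq _ => by have := colShape_le_one k q.1; omega⟩
  have hcond : (∃ p : ℕ × ℕ, KBoxF n (colShape k) t i p) ∧
      ¬ containsEntry n (colShape k) t (i + 1) := ⟨hex, hce⟩
  unfold fK
  rw [dif_pos hcond]
  have hspec := Classical.choose_spec hcond.1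
  set p := Classical.choose hcond.1 with hp
  have hp2 : p.2 = 0 := by
    have := colShape_le_one k p.1; have := hspec.2.1; omega
  have hp1 : p.1 = r := by
    apply huni _ hspec.1
    rw [← hp2]; exact hspec.2.2.1
  simp only [hp1, hp2]

lemma fK_none {t : Filling} {i : ℕ}
    (h : ¬ colHas n t i 0 ∨ containsEntry n (colShape k) t (i + 1)) :
    fK n (colShape k) i t = none := by
  unfold fK
  rw [dif_neg]
  rintro ⟨hex, hce⟩
  rcases h with h | h
  · rcases hex with ⟨p, h1, h2, h3, -⟩
    have : p.2 = 0 := by have := colShape_le_one k p.1; omega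
    rw [this] at h3
    exact h ⟨p.1, h1, h3⟩
  · exact hce h

lemma mem_updateBox {t : Filling} {r c : ℕ} {A : Finset ℕ} {r' c' a : ℕ} :
    a ∈ updateBox t r c A r' c' ↔
      (r' = r ∧ c' = c ∧ a ∈ A) ∨ (¬(r' = r ∧ c' = c) ∧ a ∈ t r' c') := by
  unfold updateBox
  split_ifs with h <;> simp [h] <;> tauto

lemma updateBox_updateBox (t : Filling) (r c : ℕ) (A B : Finset ℕ) :
    updateBox (updateBox t r c A) r c B = updateBox t r c B := by
  funext r' c'
  unfold updateBox
  split_ifs <;> rfl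

lemma updateBox_self {t : Filling} {r c : ℕ} {A : Finset ℕ} :
    updateBox t r c A r c = A := if_pos ⟨rfl, rfl⟩

lemma updateBox_ne {t : Filling} {r c : ℕ} {A : Finset ℕ} {r' c' : ℕ}
    (h : ¬(r' = r ∧ c' = c)) : updateBox t r c A r' c' = t r' c' := if_neg h

lemma updateBox_comm {t : Filling} {r c r' c' : ℕ} {A B : Finset ℕ} (h : r ≠ r') :
    updateBox (updateBox t r c A) r' c' B = updateBox (updateBox t r' c' B) r c A := by
  funext r'' c''
  unfold updateBox
  split_ifs with h1 h2 h2 <;> first | rfl | (exfalso; omega)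

lemma mem_update0 {t : Filling} {r : ℕ} {A : Finset ℕ} {a r' : ℕ}
    (h : (a ∈ A) ↔ a ∈ t r 0) : a ∈ updateBox t r 0 A r' 0 ↔ a ∈ t r' 0 := by
  rw [mem_updateBox]
  by_cases hr : r' = r
  · subst hr; simp [h]
  · simp [hr]

lemma colHas_update0 {t : Filling} {r : ℕ} {A : Finset ℕ} {a : ℕ}
    (h : (a ∈ A) ↔ a ∈ t r 0) :
    colHas n (updateBox t r 0 A) a 0 ↔ colHas n t a 0 := by
  unfold colHas
  constructor <;> rintro ⟨r', hr', hm⟩ <;> exact ⟨r', hr', by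
    first
      | exact (mem_update0 h).mp hm
      | exact (mem_update0 h).mpr hm⟩

lemma containsEntry_to_colHas {t : Filling} {a : ℕ}
    (h : containsEntry n (colShape k) t a) : colHas n t a 0 := by
  obtain ⟨r, c, hrn, hc, ha⟩ := h
  have : c = 0 := by have := colShape_le_one k r; omega
  subst this
  exact ⟨r, hrn, ha⟩

lemma colHas_to_containsEntry {t : Filling} {a r : ℕ} (hrn : r < n) (hrk : r < k)
    (ha : a ∈ t r 0) : containsEntry n (colShape k) t a :=
  ⟨r, 0, hrn, by unfold colShape; split <;> omega, ha⟩

end ColumnAux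

/-- on `SVT^n((1ᵏ))` (extending all operators by `x(0) = 0`, via
`Option.bind`): (a) `f_i^K T = 0 ↔ f_i T = 0` and `f_i f_i^K T = 0 = f_i^K f_i T`;
(b) `f_i^K` commutes with `f_j` and with `f_j^K` whenever `|i - j| > 1`;
(c) `f_{i+1}^K ∘ f_i = f_i ∘ f_{i+1} ∘ f_i^K`. -/
theorem column_K_operator_relations (n k : ℕ) (hn : 2 ≤ n) (hk1 : 1 ≤ k) (hkn : k ≤ n) :
    (∀ i, 1 ≤ i → i < n → ∀ t : Filling, IsSVT n (colShape k) t →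
      (fK n (colShape k) i t = none ↔ fRaw n (colShape k) i t = none) ∧
      (fK n (colShape k) i t).bind (fRaw n (colShape k) i) = none ∧
      (fRaw n (colShape k) i t).bind (fK n (colShape k) i) = none) ∧
    (∀ i j, 1 ≤ i → i < n → 1 ≤ j → j < n → (i + 1 < j ∨ j + 1 < i) →
      ∀ t : Filling, IsSVT n (colShape k) t →
        (fRaw n (colShape k) j t).bind (fK n (colShape k) i) =
          (fK n (colShape k) i t).bind (fRaw n (colShape k) j) ∧
        (fK n (colShape k) j t).bind (fK n (colShape k) i) =
          (fK n (colShape k) i t).bind (fK n (colShape k) j)) ∧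
    (∀ i, 1 ≤ i → i + 1 < n → ∀ t : Filling, IsSVT n (colShape k) t →
      (fRaw n (colShape k) i t).bind (fK n (colShape k) (i + 1)) =
        ((fK n (colShape k) i t).bind (fRaw n (colShape k) (i + 1))).bind
          (fRaw n (colShape k) i)) := by
  refine ⟨?_, ?_, ?_⟩
  · -- part (a)
    intro i hi1 hin t hsvt
    by_cases hcond : colHas n t i 0 ∧ ¬ colHas n t (i + 1) 0
    · obtain ⟨⟨r, hrn, hir⟩, hni⟩ := hcond
      have hrk : r < k := svt_row_lt hsvt hir
      have huni : ∀ r', r' < n → i ∈ t r' 0 → r' = r :=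
        fun r' _ h' => svt_mem_unique hsvt h' hir
      have hce : ¬ containsEntry n (colShape k) t (i + 1) :=
        fun h => hni (containsEntry_to_colHas h)
      have hfK := fK_eq (n := n) hkn hrn hrk hir huni hce
      have hfR := fRaw_eq (n := n) hk1 hrn hir huni hni (svt_col1 hsvt r)
      refine ⟨by rw [hfK, hfR]; simp, ?_, ?_⟩
      · rw [hfK, Option.bind_some]
        apply fRaw_none hk1
        rintro ⟨-, hno⟩
        exact hno ⟨r, hrn, by
          rw [mem_updateBox]; exact Or.inl ⟨rfl, rfl, Finset.mem_insert_self _ _⟩⟩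
      · rw [hfR, Option.bind_some]
        apply fK_none
        left
        rintro ⟨r', hr'n, hmem⟩
        rw [mem_updateBox] at hmem
        rcases hmem with ⟨-, -, hm⟩ | ⟨hne, hm⟩
        · rcases Finset.mem_insert.mp hm with h | h
          · omega
          · exact absurd (Finset.mem_erase.mp h).1 (by simp)
        · exact hne ⟨huni r' hr'n hm, rfl⟩
    · have hfK : fK n (colShape k) i t = none := by
        apply fK_none
        by_cases hA : colHas n t i 0
        · right
          have hB : colHas n t (i + 1) 0 := by tauto
          obtain ⟨r, hrn, hm⟩ := hB
          exact colHas_to_containsEntry hrn (svt_row_lt hsvt hm) hm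
        · exact Or.inl hA
      have hfR := fRaw_none (n := n) hk1 hcond
      exact ⟨by rw [hfK, hfR], by rw [hfK]; rfl, by rw [hfR]; rfl⟩
  · -- part (b)
    intro i j hi1 hin hj1 hjn hij t hsvt
    have hne1 : i ≠ j := by omega
    have hne2 : i ≠ j + 1 := by omega
    have hne3 : i + 1 ≠ j := by omega
    have hne4 : i + 1 ≠ j + 1 := by omega
    by_cases hPi : colHas n t i 0 ∧ ¬ colHas n t (i + 1) 0
    · obtain ⟨⟨ri, hrin, hii⟩, hni⟩ := hPi
      have hrik : ri < k := svt_row_lt hsvt hii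
      have hunii : ∀ r', r' < n → i ∈ t r' 0 → r' = ri :=
        fun r' _ h' => svt_mem_unique hsvt h' hii
      have hcei : ¬ containsEntry n (colShape k) t (i + 1) :=
        fun h => hni (containsEntry_to_colHas h)
      have hfKi := fK_eq (n := n) hkn hrin hrik hii hunii hcei
      set Bi := insert (i + 1) (t ri 0) with hBi
      set u1 := updateBox t ri 0 Bi with hu1
      have hu1j : ∀ r', j ∈ u1 r' 0 ↔ j ∈ t r' 0 := fun r' =>
        mem_update0 (by simp [hBi, hne3.symm])
      have hu1j1 : ∀ r', (j + 1) ∈ u1 r' 0 ↔ (j + 1) ∈ t r' 0 := fun r' =>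
        mem_update0 (by simp [hBi, hne4.symm, hne1.symm])
      by_cases hPj : colHas n t j 0 ∧ ¬ colHas n t (j + 1) 0
      · obtain ⟨⟨rj, hrjn, hjj⟩, hnj⟩ := hPj
        have hrjk : rj < k := svt_row_lt hsvt hjj
        have hunij : ∀ r', r' < n → j ∈ t r' 0 → r' = rj :=
          fun r' _ h' => svt_mem_unique hsvt h' hjj
        have hcej : ¬ containsEntry n (colShape k) t (j + 1) :=
          fun h => hnj (containsEntry_to_colHas h)
        have hfRj := fRaw_eq (n := n) hk1 hrjn hjj hunij hnj (svt_col1 hsvt rj)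
        have hfKj := fK_eq (n := n) hkn hrjn hrjk hjj hunij hcej
        set Bj := insert (j + 1) ((t rj 0).erase j) with hBj
        set Cj := insert (j + 1) (t rj 0) with hCj
        set t1 := updateBox t rj 0 Bj with ht1
        set v1 := updateBox t rj 0 Cj with hv1
        have ht1i : ∀ r', i ∈ t1 r' 0 ↔ i ∈ t r' 0 := fun r' =>
          mem_update0 (by simp [hBj, hne1, hne2])
        have ht1i1 : ∀ r', (i + 1) ∈ t1 r' 0 ↔ (i + 1) ∈ t r' 0 := fun r' =>
          mem_update0 (by simp [hBj, hne3, hne4, hne1])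
        have hv1i : ∀ r', i ∈ v1 r' 0 ↔ i ∈ t r' 0 := fun r' =>
          mem_update0 (by simp [hCj, hne2])
        have hv1i1 : ∀ r', (i + 1) ∈ v1 r' 0 ↔ (i + 1) ∈ t r' 0 := fun r' =>
          mem_update0 (by simp [hCj, hne4, hne1])
        -- second steps
        have h2L : fK n (colShape k) i t1
            = some (updateBox t1 ri 0 (insert (i + 1) (t1 ri 0))) :=
          fK_eq hkn hrin hrik ((ht1i ri).mpr hii)
            (fun r' hr' h' => hunii r' hr' ((ht1i r').mp h'))
            (fun h => hni (by
              obtain ⟨r'', hr''n, hm⟩ := containsEntry_to_colHas h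
              exact ⟨r'', hr''n, (ht1i1 r'').mp hm⟩))
        have h2L' : fK n (colShape k) i v1
            = some (updateBox v1 ri 0 (insert (i + 1) (v1 ri 0))) :=
          fK_eq hkn hrin hrik ((hv1i ri).mpr hii)
            (fun r' hr' h' => hunii r' hr' ((hv1i r').mp h'))
            (fun h => hni (by
              obtain ⟨r'', hr''n, hm⟩ := containsEntry_to_colHas h
              exact ⟨r'', hr''n, (hv1i1 r'').mp hm⟩))
        have hu1col1 : u1 rj 1 = t rj 1 := updateBox_ne (by simp)
        have h2R : fRaw n (colShape k) j u1
            = some (updateBox u1 rj 0 (insert (j + 1) ((u1 rj 0).erase j))) :=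
          fRaw_eq hk1 hrjn ((hu1j rj).mpr hjj)
            (fun r' hr' h' => hunij r' hr' ((hu1j r').mp h'))
            (fun h => hnj (by
              obtain ⟨r'', hr''n, hm⟩ := h
              exact ⟨r'', hr''n, (hu1j1 r'').mp hm⟩))
            (by rw [hu1col1, svt_col1 hsvt])
        have h2R' : fK n (colShape k) j u1
            = some (updateBox u1 rj 0 (insert (j + 1) (u1 rj 0))) :=
          fK_eq hkn hrjn hrjk ((hu1j rj).mpr hjj)
            (fun r' hr' h' => hunij r' hr' ((hu1j r').mp h'))
            (fun h => hnj (by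
              obtain ⟨r'', hr''n, hm⟩ := containsEntry_to_colHas h
              exact ⟨r'', hr''n, (hu1j1 r'').mp hm⟩))
        constructor
        · rw [hfRj, hfKi, Option.bind_some, Option.bind_some, h2L, h2R]
          congr 1
          by_cases hrr : ri = rj
          · subst hrr
            rw [ht1, hu1, updateBox_updateBox, updateBox_updateBox,
              updateBox_self, updateBox_self]
            congr 1
            rw [hBj, hBi, Finset.erase_insert_of_ne hne3, Finset.insert_comm]
          · rw [show t1 ri 0 = t ri 0 from updateBox_ne (by tauto),
              show u1 rj 0 = t rj 0 from updateBox_ne (by tauto)]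
            try rw [ht1, hu1, updateBox_comm (show ri ≠ rj by omega)]
            try rfl
        · rw [hfKj, hfKi, Option.bind_some, Option.bind_some, h2L', h2R']
          congr 1
          by_cases hrr : ri = rj
          · subst hrr
            rw [hv1, hu1, updateBox_updateBox, updateBox_updateBox,
              updateBox_self, updateBox_self]
            congr 1
            rw [hCj, hBi, Finset.insert_comm]
          · rw [show v1 ri 0 = t ri 0 from updateBox_ne (by tauto),
              show u1 rj 0 = t rj 0 from updateBox_ne (by tauto)]
            try rw [hv1, hu1, updateBox_comm (show ri ≠ rj by omega)]
            try rfl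
      · -- Pi holds, Pj fails
        have hfRj := fRaw_none (n := n) (k := k) hk1 hPj
        have hfKj : fK n (colShape k) j t = none := by
          apply fK_none
          by_cases hA : colHas n t j 0
          · right
            have hB : colHas n t (j + 1) 0 := by tauto
            obtain ⟨r', hr'n, hm⟩ := hB
            exact colHas_to_containsEntry hr'n (svt_row_lt hsvt hm) hm
          · exact Or.inl hA
        have hfRju1 : fRaw n (colShape k) j u1 = none := by
          apply fRaw_none hk1
          intro ⟨h1, h2⟩
          apply hPj
          constructor
          · obtain ⟨r', hr'n, hm⟩ := h1
            exact ⟨r', hr'n, (hu1j r').mp hm⟩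
          · intro ⟨r', hr'n, hm⟩
            exact h2 ⟨r', hr'n, (hu1j1 r').mpr hm⟩
        have hfKju1 : fK n (colShape k) j u1 = none := by
          apply fK_none
          by_cases hA : colHas n t j 0
          · right
            have hB : colHas n t (j + 1) 0 := by tauto
            obtain ⟨r', hr'n, hm⟩ := hB
            exact colHas_to_containsEntry hr'n (svt_row_lt hsvt hm)
              ((hu1j1 r').mpr hm)
          · exact Or.inl (fun ⟨r', hr'n, hm⟩ => hA ⟨r', hr'n, (hu1j r').mp hm⟩)
        exact ⟨by rw [hfRj, hfKi, Option.bind_some, hfRju1]; rfl,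
          by rw [hfKj, hfKi, Option.bind_some, hfKju1]; rfl⟩
    · -- Pi fails
      have hfKi : fK n (colShape k) i t = none := by
        apply fK_none
        by_cases hA : colHas n t i 0
        · right
          have hB : colHas n t (i + 1) 0 := by tauto
          obtain ⟨r', hr'n, hm⟩ := hB
          exact colHas_to_containsEntry hr'n (svt_row_lt hsvt hm) hm
        · exact Or.inl hA
      have hKi_on : ∀ (w : Filling),
          (∀ r', i ∈ w r' 0 ↔ i ∈ t r' 0) →
          (∀ r', (i + 1) ∈ w r' 0 ↔ (i + 1) ∈ t r' 0) →
          fK n (colShape k) i w = none := by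
        intro w hwi hwi1
        apply fK_none
        by_cases hA : colHas n t i 0
        · right
          have hB : colHas n t (i + 1) 0 := by tauto
          obtain ⟨r', hr'n, hm⟩ := hB
          exact colHas_to_containsEntry hr'n (svt_row_lt hsvt hm)
            ((hwi1 r').mpr hm)
        · exact Or.inl (fun ⟨r', hr'n, hm⟩ => hA ⟨r', hr'n, (hwi r').mp hm⟩)
      constructor
      · rw [hfKi]
        by_cases hPj : colHas n t j 0 ∧ ¬ colHas n t (j + 1) 0
        · obtain ⟨⟨rj, hrjn, hjj⟩, hnj⟩ := hPj
          have hunij : ∀ r', r' < n → j ∈ t r' 0 → r' = rj :=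
            fun r' _ h' => svt_mem_unique hsvt h' hjj
          have hfRj := fRaw_eq (n := n) (k := k) hk1 hrjn hjj hunij hnj
            (svt_col1 hsvt rj)
          rw [hfRj, Option.bind_some]
          rw [hKi_on _ (fun r' => mem_update0 (by simp [hne1, hne2]))
            (fun r' => mem_update0 (by simp [hne3, hne4, hne1]))]
          rfl
        · rw [fRaw_none (n := n) (k := k) hk1 hPj]; rfl
      · rw [hfKi]
        by_cases hPj : colHas n t j 0 ∧ ¬ colHas n t (j + 1) 0
        · obtain ⟨⟨rj, hrjn, hjj⟩, hnj⟩ := hPj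
          have hrjk : rj < k := svt_row_lt hsvt hjj
          have hunij : ∀ r', r' < n → j ∈ t r' 0 → r' = rj :=
            fun r' _ h' => svt_mem_unique hsvt h' hjj
          have hcej : ¬ containsEntry n (colShape k) t (j + 1) :=
            fun h => hnj (containsEntry_to_colHas h)
          have hfKj := fK_eq (n := n) hkn hrjn hrjk hjj hunij hcej
          rw [hfKj, Option.bind_some]
          rw [hKi_on _ (fun r' => mem_update0 (by simp [hne2]))
            (fun r' => mem_update0 (by simp [hne4, hne1]))]
          rfl
        · have hfKj : fK n (colShape k) j t = none := by
            apply fK_none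
            by_cases hA : colHas n t j 0
            · right
              have hB : colHas n t (j + 1) 0 := by tauto
              obtain ⟨r', hr'n, hm⟩ := hB
              exact colHas_to_containsEntry hr'n (svt_row_lt hsvt hm) hm
            · exact Or.inl hA
          rw [hfKj]; rfl
  · -- part (c)
    intro i hi1 hin1 t hsvt
    have hin : i < n := by omega
    by_cases hcond : colHas n t i 0 ∧ ¬ colHas n t (i + 1) 0
    · obtain ⟨⟨r, hrn, hir⟩, hni⟩ := hcond
      have hrk : r < k := svt_row_lt hsvt hir
      have huni : ∀ r', r' < n → i ∈ t r' 0 → r' = r :=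
        fun r' _ h' => svt_mem_unique hsvt h' hir
      have hce : ¬ containsEntry n (colShape k) t (i + 1) :=
        fun h => hni (containsEntry_to_colHas h)
      have hi1S : (i + 1) ∉ t r 0 := fun hm => hni ⟨r, hrn, hm⟩
      have hfR := fRaw_eq (n := n) (k := k) hk1 hrn hir huni hni (svt_col1 hsvt r)
      have hfK := fK_eq (n := n) hkn hrn hrk hir huni hce
      set S := t r 0 with hS
      set t1 := updateBox t r 0 (insert (i + 1) (S.erase i)) with ht1
      set u1 := updateBox t r 0 (insert (i + 1) S) with hu1
      have ht1i2 : ∀ r', (i + 2) ∈ t1 r' 0 ↔ (i + 2) ∈ t r' 0 := fun r' =>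
        mem_update0 (by simp [hS])
      have hu1i2 : ∀ r', (i + 2) ∈ u1 r' 0 ↔ (i + 2) ∈ t r' 0 := fun r' =>
        mem_update0 (by simp [hS])
      by_cases hC : colHas n t (i + 2) 0
      · -- i+2 present: both sides die at the second step
        obtain ⟨r2, hr2n, hm2⟩ := hC
        have hr2k : r2 < k := svt_row_lt hsvt hm2
        have hL2 : fK n (colShape k) (i + 1) t1 = none := by
          apply fK_none
          right
          exact colHas_to_containsEntry hr2n hr2k ((ht1i2 r2).mpr hm2)
        have hR2 : fRaw n (colShape k) (i + 1) u1 = none := by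
          apply fRaw_none hk1
          rintro ⟨-, hno⟩
          exact hno ⟨r2, hr2n, (hu1i2 r2).mpr hm2⟩
        rw [hfR, hfK, Option.bind_some, Option.bind_some, hL2, hR2]
        rfl
      · -- main case: i present, i+1 and i+2 absent
        -- LHS second step
        have ht1r0 : t1 r 0 = insert (i + 1) (S.erase i) := updateBox_self
        have hL2 : fK n (colShape k) (i + 1) t1
            = some (updateBox t1 r 0 (insert (i + 2) (t1 r 0))) := by
          apply fK_eq hkn hrn hrk
          · rw [ht1r0]; exact Finset.mem_insert_self _ _
          · intro r' hr' hm
            rw [ht1, mem_updateBox] at hm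
            rcases hm with ⟨h1, -, -⟩ | ⟨-, hm⟩
            · exact h1
            · exact absurd ⟨r', hr', hm⟩ hni
          · intro h
            obtain ⟨r'', hr''n, hm⟩ := containsEntry_to_colHas h
            exact hC ⟨r'', hr''n, (ht1i2 r'').mp hm⟩
        -- RHS second step
        have hu1r0 : u1 r 0 = insert (i + 1) S := updateBox_self
        have hR2 : fRaw n (colShape k) (i + 1) u1
            = some (updateBox u1 r 0 (insert (i + 2) ((u1 r 0).erase (i + 1)))) := by
          apply fRaw_eq hk1 hrn
          · rw [hu1r0]; exact Finset.mem_insert_self _ _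
          · intro r' hr' hm
            rw [hu1, mem_updateBox] at hm
            rcases hm with ⟨h1, -, -⟩ | ⟨-, hm⟩
            · exact h1
            · exact absurd ⟨r', hr', hm⟩ hni
          · rintro ⟨r'', hr''n, hm⟩
            exact hC ⟨r'', hr''n, (hu1i2 r'').mp hm⟩
          · rw [hu1, updateBox_ne (by simp), svt_col1 hsvt]
        set u2 := updateBox u1 r 0 (insert (i + 2) ((u1 r 0).erase (i + 1))) with hu2
        have hu2r0 : u2 r 0 = insert (i + 2) S := by
          rw [hu2, updateBox_self, hu1r0, Finset.erase_insert hi1S]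
        -- RHS third step
        have hR3 : fRaw n (colShape k) i u2
            = some (updateBox u2 r 0 (insert (i + 1) ((u2 r 0).erase i))) := by
          apply fRaw_eq hk1 hrn
          · rw [hu2r0]
            exact Finset.mem_insert_of_mem hir
          · intro r' hr' hm
            rw [hu2, mem_updateBox] at hm
            rcases hm with ⟨h1, -, -⟩ | ⟨hne, hm⟩
            · exact h1
            · rw [hu1, mem_updateBox] at hm
              rcases hm with ⟨h1, -, -⟩ | ⟨-, hm⟩
              · exact h1
              · exact huni r' hr' hm
          · rintro ⟨r', hr', hm⟩
            rw [hu2, mem_updateBox] at hm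
            rcases hm with ⟨-, -, hm⟩ | ⟨hne, hm⟩
            · rw [hu1r0] at hm
              rcases Finset.mem_insert.mp hm with h | h
              · omega
              · exact absurd (Finset.mem_erase.mp h).1 (by simp)
            · rw [hu1, mem_updateBox] at hm
              rcases hm with ⟨h1, -, hm⟩ | ⟨-, hm⟩
              · rcases Finset.mem_insert.mp hm with h | h
                · omega
                · exact hi1S h
              · exact hni ⟨r', hr', hm⟩
          · rw [hu2, updateBox_ne (by simp), hu1, updateBox_ne (by simp),
              svt_col1 hsvt]
        rw [hfR, hfK, Option.bind_some, Option.bind_some, hL2, hR2,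
          Option.bind_some, hR3]
        congr 1
        rw [ht1, hu2, hu1, updateBox_updateBox, updateBox_updateBox,
          updateBox_updateBox]
        congr 1
        simp only [updateBox_self]
        rw [Finset.erase_insert hi1S,
          Finset.erase_insert_of_ne (by omega : i + 2 ≠ i), Finset.insert_comm]
    · -- first operators are both zero
      have hfR := fRaw_none (n := n) (k := k) hk1 hcond
      have hfK : fK n (colShape k) i t = none := by
        apply fK_none
        by_cases hA : colHas n t i 0
        · right
          have hB : colHas n t (i + 1) 0 := by tauto
          obtain ⟨r', hr'n, hm⟩ := hB
          exact colHas_to_containsEntry hr'n (svt_row_lt hsvt hm) hm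
        · exact Or.inl hA
      rw [hfR, hfK]
      rfl

end SVTCrystal

end
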